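/- Let ε ∈ (0,1], let k ≥ 1 be an integer, and let Q be the output of the Frequent Directions algorithm run on an n×d matrix A with parameter ℓ = ⌈k + k/ε⌉. Then ‖A‖_F² − ‖A_k‖_F² ≤ ‖A‖_F² − ‖Q_k‖_F² ≤ (1+ε)(‖A‖_F² − ‖A_k‖_F²). -/

import Mathlib

open Matrix

/-- The squared Euclidean norm of a vector in `ℝ^m`. -/
noncomputable def sqNorm {m : ℕ} (v : Fin m → ℝ) : ℝ := ∑ i, v i ^ 2

/-- The squared Frobenius norm of a real matrix. -/
noncomputable def frobSq {m p : ℕ} (M : Matrix (Fin m) (Fin p) ℝ) : ℝ :=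
  ∑ i, ∑ j, M i j ^ 2

lemma sqNorm_eq_dot {m : ℕ} (v : Fin m → ℝ) : sqNorm v = v ⬝ᵥ v := by
  simp [sqNorm, dotProduct, sq]

lemma sqNorm_nonneg {m : ℕ} (v : Fin m → ℝ) : 0 ≤ sqNorm v :=
  Finset.sum_nonneg fun _ _ => sq_nonneg _

lemma sqNorm_mulVec {m p : ℕ} (M : Matrix (Fin m) (Fin p) ℝ) (x : Fin p → ℝ) :
    sqNorm (M.mulVec x) = x ⬝ᵥ (Mᵀ * M).mulVec x := by
  rw [sqNorm_eq_dot, ← Matrix.mulVec_mulVec]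
  conv_rhs => rw [Matrix.dotProduct_mulVec, Matrix.vecMul_transpose]

lemma sqNorm_orth_mulVec {m p : ℕ} (Z : Matrix (Fin m) (Fin m) ℝ) (hZ : Zᵀ * Z = 1)
    (N : Matrix (Fin m) (Fin p) ℝ) (x : Fin p → ℝ) :
    sqNorm ((Z * N).mulVec x) = sqNorm (N.mulVec x) := by
  rw [sqNorm_mulVec, sqNorm_mulVec, Matrix.transpose_mul, Matrix.mul_assoc,
    ← Matrix.mul_assoc Zᵀ, hZ, Matrix.one_mul]

lemma sqNorm_orth_vec {m : ℕ} (Z : Matrix (Fin m) (Fin m) ℝ) (hZ : Zᵀ * Z = 1)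
    (w : Fin m → ℝ) : sqNorm (Z.mulVec w) = sqNorm w := by
  rw [sqNorm_mulVec, hZ, Matrix.one_mulVec, sqNorm_eq_dot]

lemma sqNorm_transpose_mulVec_le {p q : ℕ} (Y : Matrix (Fin p) (Fin q) ℝ)
    (hY : Yᵀ * Y = 1) (x : Fin p → ℝ) :
    sqNorm (Yᵀ.mulVec x) ≤ sqNorm x := by
  set w := Yᵀ.mulVec x with hw
  have h1 : sqNorm (Y.mulVec w) = sqNorm w := by
    rw [sqNorm_mulVec, hY, Matrix.one_mulVec, sqNorm_eq_dot]
  have h2 : x ⬝ᵥ Y.mulVec w = sqNorm w := by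
    rw [Matrix.dotProduct_mulVec, ← Matrix.mulVec_transpose, ← hw, sqNorm_eq_dot]
  have h3 : 0 ≤ sqNorm (fun i => x i - Y.mulVec w i) := sqNorm_nonneg _
  have hexp : sqNorm (fun i => x i - Y.mulVec w i)
      = sqNorm x - 2 * (x ⬝ᵥ Y.mulVec w) + sqNorm (Y.mulVec w) := by
    simp only [sqNorm, dotProduct, Finset.mul_sum, ← Finset.sum_sub_distrib,
      ← Finset.sum_add_distrib]
    apply Finset.sum_congr rfl
    intro i _
    ring
  rw [hexp, h1, h2] at h3
  linarith

lemma sqNorm_diag_mul_mulVec {m p : ℕ} (g : Fin m → ℝ) (N : Matrix (Fin m) (Fin p) ℝ)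
    (x : Fin p → ℝ) :
    sqNorm ((Matrix.diagonal g * N).mulVec x) = ∑ j, g j ^ 2 * (N.mulVec x j) ^ 2 := by
  rw [← Matrix.mulVec_mulVec]
  simp [sqNorm, Matrix.mulVec_diagonal, mul_pow]

lemma frobSq_eq_rows {m p : ℕ} (M : Matrix (Fin m) (Fin p) ℝ) :
    frobSq M = ∑ i, sqNorm (M i) := rfl

lemma frobSq_eq_cols {m p : ℕ} (M : Matrix (Fin m) (Fin p) ℝ) :
    frobSq M = ∑ j, sqNorm (fun i => M i j) := by
  rw [frobSq, Finset.sum_comm]; rfl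

lemma frobSq_orth_mul {m p : ℕ} (Z : Matrix (Fin m) (Fin m) ℝ) (hZ : Zᵀ * Z = 1)
    (N : Matrix (Fin m) (Fin p) ℝ) : frobSq (Z * N) = frobSq N := by
  rw [frobSq_eq_cols, frobSq_eq_cols N]
  apply Finset.sum_congr rfl
  intro j _
  have : (fun i => (Z * N) i j) = Z.mulVec (fun t => N t j) := by
    funext i
    simp [Matrix.mul_apply, Matrix.mulVec, dotProduct]
  rw [this, sqNorm_orth_vec Z hZ]

lemma frobSq_diag_mul {m p : ℕ} (g : Fin m → ℝ) (Y : Matrix (Fin p) (Fin m) ℝ)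
    (hY : Yᵀ * Y = 1) :
    frobSq (Matrix.diagonal g * Yᵀ) = ∑ j, g j ^ 2 := by
  rw [frobSq_eq_rows]
  apply Finset.sum_congr rfl
  intro j _
  have hcol : ∑ t, Y t j ^ 2 = 1 := by
    have := congrArg (fun M => M j j) hY
    simpa [Matrix.mul_apply, Matrix.one_apply, sq] using this
  calc sqNorm ((Matrix.diagonal g * Yᵀ) j) = ∑ t, g j ^ 2 * Y t j ^ 2 := by
        simp [sqNorm, Matrix.mul_apply, Matrix.diagonal, mul_pow]
    _ = g j ^ 2 := by rw [← Finset.mul_sum, hcol, mul_one]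

lemma sqNorm_updateRow_mulVec {m p : ℕ} (M : Matrix (Fin m) (Fin p) ℝ) (r : Fin m)
    (b : Fin p → ℝ) (hr : M r = 0) (x : Fin p → ℝ) :
    sqNorm ((M.updateRow r b).mulVec x) = sqNorm (M.mulVec x) + (b ⬝ᵥ x) ^ 2 := by
  have h1 : ∀ (f : Fin m → ℝ), ∑ j, f j = f r + ∑ j ∈ Finset.univ.erase r, f j :=
    fun f => (Finset.add_sum_erase _ f (Finset.mem_univ r)).symm
  rw [sqNorm, sqNorm, h1, h1 (fun j => (M.mulVec x j) ^ 2)]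
  have h2 : ∀ j ∈ Finset.univ.erase r,
      ((M.updateRow r b).mulVec x j) ^ 2 = (M.mulVec x j) ^ 2 := by
    intro j hj
    have : j ≠ r := Finset.ne_of_mem_erase hj
    simp [Matrix.mulVec, Matrix.updateRow_apply, this]
  rw [Finset.sum_congr rfl h2]
  have h3 : (M.updateRow r b).mulVec x r = b ⬝ᵥ x := by simp [Matrix.mulVec]
  have h0 : M.mulVec x r = 0 := by simp [Matrix.mulVec, hr]
  rw [h3, h0]
  ring

lemma frobSq_updateRow {m p : ℕ} (M : Matrix (Fin m) (Fin p) ℝ) (r : Fin m)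
    (b : Fin p → ℝ) (hr : M r = 0) :
    frobSq (M.updateRow r b) = frobSq M + sqNorm b := by
  have h1 : ∀ (f : Fin m → ℝ), ∑ j, f j = f r + ∑ j ∈ Finset.univ.erase r, f j :=
    fun f => (Finset.add_sum_erase _ f (Finset.mem_univ r)).symm
  rw [frobSq_eq_rows, frobSq_eq_rows, h1, h1 (fun i => sqNorm (M i))]
  have h2 : ∀ j ∈ Finset.univ.erase r,
      sqNorm (M.updateRow r b j) = sqNorm (M j) := by
    intro j hj
    have : j ≠ r := Finset.ne_of_mem_erase hj
    simp [Matrix.updateRow_apply, this]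
  rw [Finset.sum_congr rfl h2]
  have h0 : sqNorm (M r) = 0 := by rw [hr]; simp [sqNorm]
  simp [h0]
  ring

-- orthonormal basis: column orthonormality from row orthonormality
lemma orth_cols {d : ℕ} (w : Fin d → Fin d → ℝ)
    (hw : ∀ a b : Fin d, ∑ t, w a t * w b t = if a = b then 1 else 0) :
    ∀ t t' : Fin d, ∑ a, w a t * w a t' = if t = t' then 1 else 0 := by
  intro t t'
  set W : Matrix (Fin d) (Fin d) ℝ := Matrix.of w with hW
  have h1 : W * Wᵀ = 1 := by
    ext a b
    simpa [Matrix.mul_apply, Matrix.one_apply, hW] using hw a b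
  have h2 : Wᵀ * W = 1 := mul_eq_one_comm.mp h1
  have := congrArg (fun M => M t t') h2
  simpa [Matrix.mul_apply, Matrix.one_apply, hW, mul_comm] using this

-- Parseval: ∑_a (u ⬝ w_a)^2 = sqNorm u
lemma parseval {d : ℕ} (w : Fin d → Fin d → ℝ)
    (hw : ∀ a b : Fin d, ∑ t, w a t * w b t = if a = b then 1 else 0)
    (u : Fin d → ℝ) : ∑ a, (u ⬝ᵥ w a) ^ 2 = sqNorm u := by
  have hc := orth_cols w hw
  calc ∑ a, (u ⬝ᵥ w a) ^ 2
      = ∑ a, ∑ t, ∑ t', (u t * u t') * (w a t * w a t') := by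
        apply Finset.sum_congr rfl; intro a _
        rw [sq, dotProduct, Finset.sum_mul_sum]
        apply Finset.sum_congr rfl; intro t _
        apply Finset.sum_congr rfl; intro t' _
        ring
    _ = ∑ t, ∑ t', (u t * u t') * ∑ a, (w a t * w a t') := by
        rw [Finset.sum_comm]
        apply Finset.sum_congr rfl; intro t _
        rw [Finset.sum_comm]
        apply Finset.sum_congr rfl; intro t' _
        rw [Finset.mul_sum]
    _ = sqNorm u := by
        simp only [hc, mul_ite, mul_one, mul_zero]
        simp [sqNorm, sq]

-- spectral expansion
lemma spec_expand {m d : ℕ} (M : Matrix (Fin m) (Fin d) ℝ)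
    (u : Fin d → Fin d → ℝ) (μ : Fin d → ℝ)
    (hu : ∀ a b : Fin d, ∑ t, u a t * u b t = if a = b then 1 else 0)
    (hMu : ∀ a, (Mᵀ * M).mulVec (u a) = μ a ^ 2 • u a)
    (x : Fin d → ℝ) :
    sqNorm (M.mulVec x) = ∑ a, μ a ^ 2 * (u a ⬝ᵥ x) ^ 2 := by
  have hc := orth_cols u hu
  have hx : x = ∑ a, (u a ⬝ᵥ x) • u a := by
    funext t
    have h1 : (∑ a, (u a ⬝ᵥ x) • u a) t = ∑ a, (∑ t', u a t' * x t') * u a t := by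
      simp [dotProduct]
    rw [h1]
    calc x t = ∑ t', x t' * (if t' = t then 1 else 0) := by simp
      _ = ∑ t', x t' * ∑ a, u a t' * u a t := by
          apply Finset.sum_congr rfl; intro t' _; rw [hc]
      _ = ∑ t', ∑ a, x t' * (u a t' * u a t) := by
          apply Finset.sum_congr rfl; intro t' _; rw [Finset.mul_sum]
      _ = ∑ a, ∑ t', x t' * (u a t' * u a t) := Finset.sum_comm
      _ = ∑ a, (∑ t', u a t' * x t') * u a t := by
          apply Finset.sum_congr rfl; intro a _
          rw [Finset.sum_mul]
          apply Finset.sum_congr rfl; intro t' _; ring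
  rw [sqNorm_mulVec]
  have hlin : (Mᵀ * M).mulVec x = ∑ a, (u a ⬝ᵥ x) • ((Mᵀ * M).mulVec (u a)) := by
    conv_lhs => rw [hx]
    simp only [← Matrix.mulVecLin_apply, map_sum, _root_.map_smul]
  rw [hlin]
  have h2 : x ⬝ᵥ ∑ a, (u a ⬝ᵥ x) • ((Mᵀ * M).mulVec (u a))
      = ∑ a, (u a ⬝ᵥ x) * (x ⬝ᵥ ((Mᵀ * M).mulVec (u a))) := by
    simp only [dotProduct, Finset.sum_apply, Pi.smul_apply, smul_eq_mul, Finset.mul_sum]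
    rw [Finset.sum_comm]
    apply Finset.sum_congr rfl; intro a _
    apply Finset.sum_congr rfl; intro t _
    ring
  rw [h2]
  apply Finset.sum_congr rfl
  intro a _
  rw [hMu a]
  have h3 : x ⬝ᵥ (μ a ^ 2 • u a) = μ a ^ 2 * (u a ⬝ᵥ x) := by
    simp only [dotProduct, Pi.smul_apply, smul_eq_mul, Finset.mul_sum]
    apply Finset.sum_congr rfl; intro t _; ring
  rw [h3]
  ring

lemma majorize {d : ℕ} (k : ℕ) (g W : Fin d → ℝ)
    (hg : ∀ a b : Fin d, a ≤ b → g b ≤ g a) (hgnn : ∀ a, 0 ≤ g a)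
    (hW0 : ∀ a, 0 ≤ W a) (hW1 : ∀ a, W a ≤ 1)
    (hWsum : ∑ a, W a = ((Finset.univ.filter (fun a : Fin d => (a : ℕ) < k)).card : ℝ)) :
    ∑ a, g a * W a ≤ ∑ a ∈ Finset.univ.filter (fun a : Fin d => (a : ℕ) < k), g a := by
  by_cases hkd : d ≤ k
  · have hF : Finset.univ.filter (fun a : Fin d => (a : ℕ) < k) = Finset.univ := by
      apply Finset.filter_true_of_mem; intro a _; exact lt_of_lt_of_le a.isLt hkd
    rw [hF]
    exact Finset.sum_le_sum fun a _ => mul_le_of_le_one_right (hgnn a) (hW1 a)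
  · push_neg at hkd
    set F := Finset.univ.filter (fun a : Fin d => (a : ℕ) < k) with hFdef
    set a0 : Fin d := ⟨k, hkd⟩ with ha0
    set t := g a0 with ht
    have key : ∀ a : Fin d, g a * W a ≤
        (if (a : ℕ) < k then g a else 0) + t * W a - t * (if (a : ℕ) < k then 1 else 0) := by
      intro a
      by_cases h : (a : ℕ) < k
      · simp only [h, if_true]
        have h1 : t ≤ g a := hg a a0 (by rw [Fin.le_def]; exact le_of_lt h)
        nlinarith [hW1 a]
      · simp only [h, if_false]
        have h1 : g a ≤ t := hg a0 a (by rw [Fin.le_def]; exact not_lt.mp h)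
        nlinarith [hW0 a]
    calc ∑ a, g a * W a
        ≤ ∑ a : Fin d, ((if (a : ℕ) < k then g a else 0) + t * W a
            - t * (if (a : ℕ) < k then 1 else 0)) := Finset.sum_le_sum fun a _ => key a
      _ = (∑ a ∈ F, g a) + t * (∑ a, W a) - t * F.card := by
          have e1 : ∑ a ∈ F, g a = ∑ a : Fin d, (if (a : ℕ) < k then g a else 0) :=
            Finset.sum_filter _ _
          have e2 : ((F.card : ℕ) : ℝ) = ∑ a : Fin d, (if (a : ℕ) < k then (1 : ℝ) else 0) := by
            rw [← Finset.sum_filter]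
            simp [hFdef]
          rw [e1, e2, Finset.mul_sum, Finset.mul_sum, ← Finset.sum_add_distrib,
            ← Finset.sum_sub_distrib]
      _ = ∑ a ∈ F, g a := by rw [hWsum]; ring

lemma fin_telescope {n : ℕ} (f : Fin (n + 1) → ℝ) :
    ∑ i : Fin n, (f i.succ - f i.castSucc) = f (Fin.last n) - f 0 := by
  have h := Finset.sum_range_sub (fun j => f ⟨min j n, by omega⟩) n
  calc ∑ i : Fin n, (f i.succ - f i.castSucc)
      = ∑ j ∈ Finset.range n,
          (f ⟨min (j + 1) n, by omega⟩ - f ⟨min j n, by omega⟩) := by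
        rw [← Fin.sum_univ_eq_sum_range]
        apply Finset.sum_congr rfl
        intro i _
        have e1 : (⟨min ((i : ℕ) + 1) n, by omega⟩ : Fin (n + 1)) = i.succ := by
          apply Fin.ext
          simp only [Fin.val_succ]
          omega
        have e2 : (⟨min (i : ℕ) n, by omega⟩ : Fin (n + 1)) = i.castSucc := by
          apply Fin.ext
          simp only [Fin.coe_castSucc]
          omega
        rw [e1, e2]
    _ = f ⟨min n n, by omega⟩ - f ⟨min 0 n, by omega⟩ := h
    _ = f (Fin.last n) - f 0 := by
        congr 1 <;> apply congrArg <;> apply Fin.ext <;> simp [Fin.last]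

lemma frob_parseval {m d : ℕ} (M : Matrix (Fin m) (Fin d) ℝ)
    (w : Fin d → Fin d → ℝ)
    (hw : ∀ a b : Fin d, ∑ t, w a t * w b t = if a = b then 1 else 0) :
    frobSq M = ∑ a, sqNorm (M.mulVec (w a)) := by
  calc frobSq M = ∑ r, sqNorm (M r) := frobSq_eq_rows M
    _ = ∑ r, ∑ a, (M r ⬝ᵥ w a) ^ 2 := by
        apply Finset.sum_congr rfl
        intro r _
        rw [parseval w hw]
    _ = ∑ a, ∑ r, (M r ⬝ᵥ w a) ^ 2 := Finset.sum_comm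
    _ = ∑ a, sqNorm (M.mulVec (w a)) := rfl

lemma kyfan {m d : ℕ} (k : ℕ) (M : Matrix (Fin m) (Fin d) ℝ)
    (u : Fin d → Fin d → ℝ) (μ : Fin d → ℝ)
    (hu : ∀ a b : Fin d, ∑ t, u a t * u b t = if a = b then 1 else 0)
    (hμmono : ∀ a b : Fin d, a ≤ b → μ b ≤ μ a) (hμnn : ∀ a, 0 ≤ μ a)
    (hMu : ∀ a, (Mᵀ * M).mulVec (u a) = μ a ^ 2 • u a)
    (w : Fin d → Fin d → ℝ)
    (hw : ∀ a b : Fin d, ∑ t, w a t * w b t = if a = b then 1 else 0) :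
    ∑ i ∈ Finset.univ.filter (fun i : Fin d => (i : ℕ) < k), sqNorm (M.mulVec (w i)) ≤
      ∑ i ∈ Finset.univ.filter (fun i : Fin d => (i : ℕ) < k), sqNorm (M.mulVec (u i)) := by
  set F := Finset.univ.filter (fun i : Fin d => (i : ℕ) < k) with hF
  set W : Fin d → ℝ := fun a => ∑ i ∈ F, (u a ⬝ᵥ w i) ^ 2 with hW
  have hMuval : ∀ b, sqNorm (M.mulVec (u b)) = μ b ^ 2 := by
    intro b
    rw [spec_expand M u μ hu hMu (u b)]
    calc ∑ a, μ a ^ 2 * (u a ⬝ᵥ u b) ^ 2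
        = ∑ a, μ a ^ 2 * (if a = b then 1 else 0) ^ 2 := by
          apply Finset.sum_congr rfl
          intro a _
          rw [show u a ⬝ᵥ u b = if a = b then 1 else 0 from hu a b]
      _ = μ b ^ 2 := by simp
  have hLHS : ∑ i ∈ F, sqNorm (M.mulVec (w i)) = ∑ a, μ a ^ 2 * W a := by
    calc ∑ i ∈ F, sqNorm (M.mulVec (w i))
        = ∑ i ∈ F, ∑ a, μ a ^ 2 * (u a ⬝ᵥ w i) ^ 2 := by
          apply Finset.sum_congr rfl
          intro i _
          exact spec_expand M u μ hu hMu (w i)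
      _ = ∑ a, ∑ i ∈ F, μ a ^ 2 * (u a ⬝ᵥ w i) ^ 2 := Finset.sum_comm
      _ = ∑ a, μ a ^ 2 * W a := by
          apply Finset.sum_congr rfl
          intro a _
          rw [hW, Finset.mul_sum]
  have hunit : ∀ a, sqNorm (u a) = 1 := by
    intro a
    have := hu a a
    simpa [sqNorm, sq] using this
  have hwunit : ∀ i, sqNorm (w i) = 1 := by
    intro i
    have := hw i i
    simpa [sqNorm, sq] using this
  have hW0 : ∀ a, 0 ≤ W a := fun a => Finset.sum_nonneg fun _ _ => sq_nonneg _
  have hW1 : ∀ a, W a ≤ 1 := by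
    intro a
    have hle : W a ≤ ∑ i, (u a ⬝ᵥ w i) ^ 2 :=
      Finset.sum_le_sum_of_subset_of_nonneg (Finset.filter_subset _ _)
        (fun _ _ _ => sq_nonneg _)
    calc W a ≤ ∑ i, (u a ⬝ᵥ w i) ^ 2 := hle
      _ = sqNorm (u a) := parseval w hw (u a)
      _ = 1 := hunit a
  have hWsum : ∑ a, W a = (F.card : ℝ) := by
    calc ∑ a, W a = ∑ i ∈ F, ∑ a, (u a ⬝ᵥ w i) ^ 2 := Finset.sum_comm
      _ = ∑ i ∈ F, (1 : ℝ) := by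
          apply Finset.sum_congr rfl
          intro i _
          calc ∑ a, (u a ⬝ᵥ w i) ^ 2 = ∑ a, (w i ⬝ᵥ u a) ^ 2 := by
                apply Finset.sum_congr rfl
                intro a _
                rw [dotProduct_comm]
            _ = sqNorm (w i) := parseval u hu (w i)
            _ = 1 := hwunit i
      _ = (F.card : ℝ) := by simp
  rw [hLHS]
  have := majorize k (fun a => μ a ^ 2) W
    (fun a b hab => pow_le_pow_left₀ (hμnn b) (hμmono a b hab) 2)
    (fun a => sq_nonneg _) hW0 hW1 hWsum
  calc ∑ a, μ a ^ 2 * W a ≤ ∑ a ∈ F, μ a ^ 2 := this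
    _ = ∑ i ∈ F, sqNorm (M.mulVec (u i)) := by
        apply Finset.sum_congr rfl
        intro a _
        rw [hMuval a]
/-- Let `ε ∈ (0,1]`, let `k ≥ 1` be an integer, and let `Q` be the output of
the Frequent Directions algorithm run on an `n × d` matrix `A` with parameter
`ℓ = ⌈k + k/ε⌉`.  Then
`‖A‖_F² - ‖A_k‖_F² ≤ ‖A‖_F² - ‖Q_k‖_F² ≤ (1 + ε)(‖A‖_F² - ‖A_k‖_F²)`, where
`‖A_k‖_F² = ∑_{i=1}^k ‖A v_i‖²` and `‖Q_k‖_F² = ∑_{i=1}^k ‖Q y_i‖²` for right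
singular vectors `v` of `A` and `y` of `Q`, ordered by decreasing singular
values. -/
theorem fd_residual_norm_bounds
    (n d ℓ : ℕ) (hℓ : 0 < ℓ)
    (A : Matrix (Fin n) (Fin d) ℝ)
    (Q : Fin (n + 1) → Matrix (Fin ℓ) (Fin d) ℝ)
    (C : Fin n → Matrix (Fin ℓ) (Fin d) ℝ)
    (Z : Fin n → Matrix (Fin ℓ) (Fin ℓ) ℝ)
    (Y : Fin n → Matrix (Fin d) (Fin ℓ) ℝ)
    (s : Fin n → Fin ℓ → ℝ) (δ : Fin n → ℝ)
    -- the algorithm starts with the zero matrix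
    (hQ0 : Q 0 = 0)
    -- `C i` is `Q^{i-1}` with its last row replaced by the `i`-th row of `A`
    (hC : ∀ i : Fin n,
      C i = (Q i.castSucc).updateRow ⟨ℓ - 1, Nat.sub_lt hℓ Nat.one_pos⟩ (A i))
    -- a singular value decomposition `C i = Z S Yᵀ` of `C i`
    (hZ : ∀ i, (Z i)ᵀ * Z i = 1)
    (hY : ∀ i, (Y i)ᵀ * Y i = 1)
    (hSVD : ∀ i, C i = Z i * Matrix.diagonal (s i) * (Y i)ᵀ)
    (hmono : ∀ i, ∀ j j' : Fin ℓ, j ≤ j' → s i j' ≤ s i j)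
    (hnn : ∀ i j, 0 ≤ s i j)
    -- `δ i` is the square of the smallest singular value of `C i`
    (hδ : ∀ i, δ i = s i ⟨ℓ - 1, Nat.sub_lt hℓ Nat.one_pos⟩ ^ 2)
    -- the shrinking step producing `Q^i = S' Yᵀ`
    (hQs : ∀ i : Fin n,
      Q i.succ = Matrix.diagonal (fun j => Real.sqrt (s i j ^ 2 - δ i)) * (Y i)ᵀ)
    -- `v` is an orthonormal family of right singular vectors of `A`,
    -- ordered by decreasing singular values `σA`
    (v : Fin d → Fin d → ℝ) (σA : Fin d → ℝ)
    (hv : ∀ a b : Fin d, ∑ t, v a t * v b t = if a = b then 1 else 0)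
    (hσmono : ∀ a b : Fin d, a ≤ b → σA b ≤ σA a)
    (hσnn : ∀ a, 0 ≤ σA a)
    (hAv : ∀ a, (Aᵀ * A).mulVec (v a) = σA a ^ 2 • v a)
    -- `y` is an orthonormal family of right singular vectors of the output
    -- matrix `Q = Qⁿ`, ordered by decreasing singular values `τ`
    (y : Fin d → Fin d → ℝ) (τ : Fin d → ℝ)
    (hy : ∀ a b : Fin d, ∑ t, y a t * y b t = if a = b then 1 else 0)
    (hτmono : ∀ a b : Fin d, a ≤ b → τ b ≤ τ a)
    (hτnn : ∀ a, 0 ≤ τ a)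
    (hQy : ∀ a, ((Q (Fin.last n))ᵀ * Q (Fin.last n)).mulVec (y a) = τ a ^ 2 • y a)
    (ε : ℝ) (hε0 : 0 < ε) (hε1 : ε ≤ 1) (k : ℕ) (hk : 1 ≤ k)
    (hℓdef : ℓ = ⌈(k : ℝ) + (k : ℝ) / ε⌉₊)
 :
    frobSq A - (∑ i ∈ Finset.univ.filter (fun i : Fin d => (i : ℕ) < k), sqNorm (A.mulVec (v i))) ≤
      frobSq A - (∑ i ∈ Finset.univ.filter (fun i : Fin d => (i : ℕ) < k),
      sqNorm ((Q (Fin.last n)).mulVec (y i))) ∧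
    frobSq A - (∑ i ∈ Finset.univ.filter (fun i : Fin d => (i : ℕ) < k),
      sqNorm ((Q (Fin.last n)).mulVec (y i))) ≤
      (1 + ε) * (frobSq A - ∑ i ∈ Finset.univ.filter (fun i : Fin d => (i : ℕ) < k), sqNorm (A.mulVec (v i))) := by
  classical
  set r : Fin ℓ := ⟨ℓ - 1, Nat.sub_lt hℓ Nat.one_pos⟩ with hrdef
  have hrtop : ∀ j : Fin ℓ, j ≤ r := by
    intro j
    rw [Fin.le_def]
    have := j.isLt
    simp only [hrdef]
    omega
  have hs2δ : ∀ i j, 0 ≤ s i j ^ 2 - δ i := by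
    intro i j
    rw [hδ]
    have h1 := hmono i j r (hrtop j)
    have h2 := hnn i r
    nlinarith
  have hδnn : ∀ i, 0 ≤ δ i := by
    intro i
    rw [hδ]
    positivity
  have hΔnn : 0 ≤ ∑ i, δ i := Finset.sum_nonneg fun i _ => hδnn i
  -- last row of each Q is zero
  have hlast : ∀ i : Fin (n + 1), Q i r = 0 := by
    intro i
    refine Fin.cases ?_ ?_ i
    · rw [hQ0]; rfl
    · intro j
      rw [hQs j]
      funext t
      have hz : Real.sqrt (s j r ^ 2 - δ j) = 0 := by
        rw [hδ]
        simp [hrdef]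
      simp [Matrix.diagonal_mul, hz]
  -- per-step identities
  have hCx : ∀ (i : Fin n) (x : Fin d → ℝ),
      sqNorm ((C i).mulVec x) = ∑ j, s i j ^ 2 * ((Y i)ᵀ.mulVec x j) ^ 2 := by
    intro i x
    rw [hSVD i, Matrix.mul_assoc, sqNorm_orth_mulVec _ (hZ i), sqNorm_diag_mul_mulVec]
  have hQx : ∀ (i : Fin n) (x : Fin d → ℝ),
      sqNorm ((Q i.succ).mulVec x)
        = ∑ j, (s i j ^ 2 - δ i) * ((Y i)ᵀ.mulVec x j) ^ 2 := by
    intro i x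
    rw [hQs i, sqNorm_diag_mul_mulVec]
    apply Finset.sum_congr rfl
    intro j _
    rw [sq (Real.sqrt _), Real.mul_self_sqrt (hs2δ i j)]
  have hQC : ∀ (i : Fin n) (x : Fin d → ℝ),
      sqNorm ((Q i.succ).mulVec x)
        = sqNorm ((C i).mulVec x) - δ i * sqNorm ((Y i)ᵀ.mulVec x) := by
    intro i x
    rw [hQx, hCx]
    simp only [sqNorm, Finset.mul_sum, ← Finset.sum_sub_distrib]
    apply Finset.sum_congr rfl
    intro j _
    ring
  have hCQ : ∀ (i : Fin n) (x : Fin d → ℝ),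
      sqNorm ((C i).mulVec x) = sqNorm ((Q i.castSucc).mulVec x) + (A i ⬝ᵥ x) ^ 2 := by
    intro i x
    rw [hC i]
    exact sqNorm_updateRow_mulVec _ _ _ (hlast i.castSucc) x
  have hstep_ub : ∀ (i : Fin n) (x : Fin d → ℝ),
      sqNorm ((Q i.succ).mulVec x)
        ≤ sqNorm ((Q i.castSucc).mulVec x) + (A i ⬝ᵥ x) ^ 2 := by
    intro i x
    rw [hQC, hCQ]
    have := mul_nonneg (hδnn i) (sqNorm_nonneg ((Y i)ᵀ.mulVec x))
    linarith
  have hstep_lb : ∀ (i : Fin n) (x : Fin d → ℝ),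
      sqNorm ((Q i.castSucc).mulVec x) + (A i ⬝ᵥ x) ^ 2 - δ i * sqNorm x
        ≤ sqNorm ((Q i.succ).mulVec x) := by
    intro i x
    rw [hQC, hCQ]
    have hb := sqNorm_transpose_mulVec_le (Y i) (hY i) x
    have := mul_le_mul_of_nonneg_left hb (hδnn i)
    linarith
  -- telescoping
  have htel : ∀ (x : Fin d → ℝ),
      ∑ i : Fin n, (sqNorm ((Q i.succ).mulVec x) - sqNorm ((Q i.castSucc).mulVec x))
        = sqNorm ((Q (Fin.last n)).mulVec x) := by
    intro x
    rw [fin_telescope (fun i => sqNorm ((Q i).mulVec x))]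
    rw [hQ0]
    simp [sqNorm, Matrix.zero_mulVec]
  have hAx : ∀ (x : Fin d → ℝ), sqNorm (A.mulVec x) = ∑ i : Fin n, (A i ⬝ᵥ x) ^ 2 := by
    intro x
    rfl
  have T1 : ∀ (x : Fin d → ℝ),
      sqNorm ((Q (Fin.last n)).mulVec x) ≤ sqNorm (A.mulVec x) := by
    intro x
    rw [← htel x, hAx]
    apply Finset.sum_le_sum
    intro i _
    have := hstep_ub i x
    linarith
  have T2 : ∀ (x : Fin d → ℝ),
      sqNorm (A.mulVec x) - (∑ i, δ i) * sqNorm x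
        ≤ sqNorm ((Q (Fin.last n)).mulVec x) := by
    intro x
    rw [← htel x, hAx]
    have h1 : ∑ i : Fin n, ((A i ⬝ᵥ x) ^ 2 - δ i * sqNorm x)
        ≤ ∑ i : Fin n, (sqNorm ((Q i.succ).mulVec x) - sqNorm ((Q i.castSucc).mulVec x)) := by
      apply Finset.sum_le_sum
      intro i _
      have := hstep_lb i x
      linarith
    rw [Finset.sum_sub_distrib, ← Finset.sum_mul] at h1
    linarith
  -- Frobenius telescoping
  have hQFl : frobSq (Q (Fin.last n)) = frobSq A - (ℓ : ℝ) * ∑ i, δ i := by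
    have hstep : ∀ i : Fin n,
        frobSq (Q i.succ) - frobSq (Q i.castSucc) = sqNorm (A i) - (ℓ : ℝ) * δ i := by
      intro i
      have h1 : frobSq (C i) = ∑ j, s i j ^ 2 := by
        rw [hSVD i, Matrix.mul_assoc, frobSq_orth_mul _ (hZ i), frobSq_diag_mul _ _ (hY i)]
      have h2 : frobSq (Q i.succ) = (∑ j, s i j ^ 2) - (ℓ : ℝ) * δ i := by
        rw [hQs i, frobSq_diag_mul _ _ (hY i)]
        have : ∀ j : Fin ℓ, (Real.sqrt (s i j ^ 2 - δ i)) ^ 2 = s i j ^ 2 - δ i := by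
          intro j
          rw [sq (Real.sqrt _), Real.mul_self_sqrt (hs2δ i j)]
        rw [Finset.sum_congr rfl fun j _ => this j, Finset.sum_sub_distrib]
        simp [mul_comm]
      have h3 : frobSq (C i) = frobSq (Q i.castSucc) + sqNorm (A i) := by
        rw [hC i]
        exact frobSq_updateRow _ _ _ (hlast i.castSucc)
      rw [h2, ← h1, h3]
      ring
    have htel2 := fin_telescope (fun i => frobSq (Q i))
    rw [Finset.sum_congr rfl fun i _ => hstep i] at htel2
    have hQ0f : frobSq (Q 0) = 0 := by rw [hQ0]; simp [frobSq]
    rw [hQ0f, sub_zero] at htel2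
    have hAf : frobSq A = ∑ i : Fin n, sqNorm (A i) := frobSq_eq_rows A
    rw [← htel2, Finset.sum_sub_distrib, hAf, ← Finset.mul_sum]
  -- endgame
  set F := Finset.univ.filter (fun i : Fin d => (i : ℕ) < k) with hF
  set QL := Q (Fin.last n) with hQLdef
  set Δ := ∑ i, δ i with hΔdef
  have hunitv : ∀ a, sqNorm (v a) = 1 := fun a => by simpa [sqNorm, sq] using hv a a
  have kf1 : ∑ i ∈ F, sqNorm (A.mulVec (y i)) ≤ ∑ i ∈ F, sqNorm (A.mulVec (v i)) :=
    kyfan k A v σA hv hσmono hσnn hAv y hy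
  have kf2 : ∑ i ∈ F, sqNorm (QL.mulVec (v i)) ≤ ∑ i ∈ F, sqNorm (QL.mulVec (y i)) :=
    kyfan k QL y τ hy hτmono hτnn hQy v hv
  have ineq1sum : ∑ i ∈ F, sqNorm (QL.mulVec (y i)) ≤ ∑ i ∈ F, sqNorm (A.mulVec (v i)) := by
    calc ∑ i ∈ F, sqNorm (QL.mulVec (y i))
        ≤ ∑ i ∈ F, sqNorm (A.mulVec (y i)) := Finset.sum_le_sum fun i _ => T1 (y i)
      _ ≤ ∑ i ∈ F, sqNorm (A.mulVec (v i)) := kf1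
  constructor
  · exact sub_le_sub_left ineq1sum _
  · have hlb : ∑ i ∈ F, (sqNorm (A.mulVec (v i)) - Δ) ≤ ∑ i ∈ F, sqNorm (QL.mulVec (v i)) := by
      apply Finset.sum_le_sum
      intro i _
      have h := T2 (v i)
      rw [hunitv i, mul_one] at h
      exact h
    rw [Finset.sum_sub_distrib, Finset.sum_const, nsmul_eq_mul] at hlb
    have hfrob : frobSq QL = ∑ a, sqNorm (QL.mulVec (v a)) := frob_parseval QL v hv
    have hge : ∑ i ∈ F, sqNorm (QL.mulVec (v i)) ≤ frobSq QL := by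
      rw [hfrob]
      exact Finset.sum_le_sum_of_subset_of_nonneg (Finset.filter_subset _ _)
        (fun _ _ _ => sqNorm_nonneg _)
    have hm : (F.card : ℝ) ≤ (k : ℝ) := by
      have hcard : F.card ≤ (Finset.range k).card := by
        apply Finset.card_le_card_of_injOn (fun a : Fin d => (a : ℕ))
        · intro a ha
          simp only [hF, Finset.mem_filter] at ha
          exact Finset.mem_range.mpr (by simpa [hF] using ha)
        · intro a _ b _ h
          exact Fin.ext h
      rw [Finset.card_range] at hcard
      exact_mod_cast hcard
    have hℓk : (k : ℝ) + (k : ℝ) / ε ≤ (ℓ : ℝ) := by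
      rw [hℓdef]
      exact Nat.le_ceil _
    set R := frobSq A - ∑ i ∈ F, sqNorm (A.mulVec (v i)) with hR
    have e1 : ((ℓ : ℝ) - F.card) * Δ ≤ R := by
      rw [sub_mul]
      have h1 : frobSq QL = frobSq A - (ℓ : ℝ) * Δ := hQFl
      linarith [hge, hlb]
    have e2 : (k : ℝ) ≤ ε * ((ℓ : ℝ) - k) := by
      have h := (div_le_iff₀ hε0).mp (by linarith : (k : ℝ) / ε ≤ (ℓ : ℝ) - k)
      linarith
    have e3 : (k : ℝ) * Δ ≤ ε * R := by
      have f1 : (k : ℝ) * Δ ≤ (ε * ((ℓ : ℝ) - k)) * Δ := mul_le_mul_of_nonneg_right e2 hΔnn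
      have f2 : ((ℓ : ℝ) - k) * Δ ≤ ((ℓ : ℝ) - F.card) * Δ :=
        mul_le_mul_of_nonneg_right (by linarith) hΔnn
      have f3 : ε * (((ℓ : ℝ) - F.card) * Δ) ≤ ε * R := mul_le_mul_of_nonneg_left e1 hε0.le
      have f4 : ε * (((ℓ : ℝ) - k) * Δ) ≤ ε * (((ℓ : ℝ) - F.card) * Δ) :=
        mul_le_mul_of_nonneg_left f2 hε0.le
      nlinarith
    have mΔ : (F.card : ℝ) * Δ ≤ (k : ℝ) * Δ := mul_le_mul_of_nonneg_right hm hΔnn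
    have final : frobSq A - ∑ i ∈ F, sqNorm (QL.mulVec (y i)) ≤ R + (F.card : ℝ) * Δ := by
      linarith [kf2, hlb]
    nlinarith [final, mΔ, e3]
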